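/- Suppose P > 0 and Q + V·P ≤ 0 (so that Q < Q + V·P ≤ 0). Then the explicit tuple given by R_b* = min{R, C_char}, B_e* = 0, R_e* = min{R − R_b*, E}, G_b* = C_char − R_b*, G_e* = E − R_e* is feasible for P3 and attains the minimum: f at this tuple is ≤ f(x) for every x ∈ F. -/
import Mathlib


/-- The feasible set of problem P3. -/
def P3Feasible (R E Cchar Cdis : ℝ) (Re Rb Ge Gb Be : ℝ) : Prop :=
  0 ≤ Gb + Rb ∧ Gb + Rb ≤ Cchar ∧ 0 ≤ Gb ∧ 0 ≤ Rb ∧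
  0 ≤ Be ∧ Be ≤ Cdis ∧ 0 ≤ Re + Rb ∧ Re + Rb ≤ R ∧ 0 ≤ Re ∧
  E = Re + Be + Ge ∧ 0 ≤ Ge ∧ (Gb + Rb) * Be = 0

/-- The objective function of problem P3. -/
noncomputable def P3Obj (P V Q : ℝ) (Re Rb Ge Gb Be : ℝ) : ℝ :=
  (Q + V * P) * Gb + Q * Rb - (Q + V * P) * Be - V * P * Re

/-- Explicit optimal solution of P3 when `0 < P` and
`Q + V * P ≤ 0`. -/
theorem p3_explicit_solution_case1
    (R E P V Q Cchar Cdis : ℝ)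
    (hR : 0 ≤ R) (hE : 0 ≤ E) (hP : 0 < P) (hV : 0 < V)
    (hCchar : 0 ≤ Cchar) (hCdis : 0 ≤ Cdis)
    (hQVP : Q + V * P ≤ 0) :
    P3Feasible R E Cchar Cdis
      (min (R - min R Cchar) E) (min R Cchar) (E - min (R - min R Cchar) E)
      (Cchar - min R Cchar) 0 ∧
    ∀ Re' Rb' Ge' Gb' Be' : ℝ,
      P3Feasible R E Cchar Cdis Re' Rb' Ge' Gb' Be' →
      P3Obj P V Q (min (R - min R Cchar) E) (min R Cchar)
        (E - min (R - min R Cchar) E) (Cchar - min R Cchar) 0 ≤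
      P3Obj P V Q Re' Rb' Ge' Gb' Be' := by
  have hRb : min R Cchar ≤ R := min_le_left _ _
  have hRb2 : min R Cchar ≤ Cchar := min_le_right _ _
  have hRb0 : 0 ≤ min R Cchar := le_min hR hCchar
  have hRe0 : 0 ≤ min (R - min R Cchar) E := le_min (by linarith) hE
  have hReE : min (R - min R Cchar) E ≤ E := min_le_right _ _
  have hReR : min (R - min R Cchar) E ≤ R - min R Cchar := min_le_left _ _
  constructor
  · refine ⟨by linarith, by linarith, by linarith, hRb0, le_refl 0, hCdis,
      by linarith, by linarith, hRe0, by ring, by linarith, by ring⟩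
  · rintro Re' Rb' Ge' Gb' Be'
      ⟨h1, h2, h3, h4, h5, h6, h7, h8, h9, h10, h11, h12⟩
    have hVP : 0 < V * P := mul_pos hV hP
    -- key: Rb' + Re' ≤ min R Cchar + min (R - min R Cchar) E
    have hsum : Rb' + Re' ≤ min R Cchar + min (R - min R Cchar) E := by
      rcases le_total R Cchar with h | h
      · have e1 : min R Cchar = R := min_eq_left h
        have e2 : min (R - min R Cchar) E = 0 := by
          rw [e1]; simp [hE]
        rw [e2, e1]; linarith
      · have e1 : min R Cchar = Cchar := min_eq_right h
        rw [e1]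
        have hRb' : Rb' ≤ Cchar := by linarith
        have hRe' : Re' ≤ E := by linarith
        rcases le_total (R - Cchar) E with h2' | h2'
        · rw [min_eq_left h2']; linarith
        · rw [min_eq_right h2']; linarith
    have hterm1 : (Q + V * P) * Cchar ≤ (Q + V * P) * (Gb' + Rb') :=
      mul_le_mul_of_nonpos_left h2 hQVP
    have hterm2 : 0 ≤ -(Q + V * P) * Be' :=
      mul_nonneg (by linarith) h5
    have hterm3 : V * P * (Rb' + Re') ≤
        V * P * (min R Cchar + min (R - min R Cchar) E) :=
      mul_le_mul_of_nonneg_left hsum (le_of_lt hVP)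
    unfold P3Obj
    nlinarith [hterm1, hterm2, hterm3]
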